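/- Let C be a commutative monoid and N a right H(C)-module. The assignment G_*(C, N)([n]) = ⊕_{(a_1,...,a_n) ∈ C^n} N(a_1⋯a_n), with action on a pointed map f : [n] → [m] given by f_*(ι_{(a_1,...,a_n)}(x)) = ι_{(b_1,...,b_m)}((b_0)^{op}-action applied to x), where b_j = ∏_{f(i)=j} a_i, is a well-defined left Γ-module (covariant functor Γ → K-Mod). -/

import Mathlib

open CategoryTheory Opposite DirectSum

set_option maxHeartbeats 1000000
set_option synthInstance.maxHeartbeats 1000000

def HCat (C : Type) := C
def HCat.of {C : Type} : C → HCat C := id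
def HCat.un {C : Type} : HCat C → C := id

instance (C : Type) [CommMonoid C] : Category (HCat C) where
  Hom a b := {c : C // c * a.un = b.un}
  id a := ⟨1, one_mul a.un⟩
  comp f g := ⟨g.1 * f.1, by rw [mul_assoc, f.2, g.2]⟩
  id_comp f := Subtype.ext (mul_one f.1)
  comp_id f := Subtype.ext (one_mul f.1)
  assoc f g h := Subtype.ext (mul_assoc h.1 g.1 f.1).symm

abbrev GammaCat := ℕ

instance : Category GammaCat where
  Hom n m := {f : Fin (n+1) → Fin (m+1) // f 0 = 0}
  id n := ⟨id, rfl⟩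
  comp f g := ⟨g.1 ∘ f.1, by simp [f.2, g.2]⟩
  id_comp f := rfl
  comp_id f := rfl
  assoc f g h := rfl

variable (C : Type) [CommMonoid C] [DecidableEq C] (K : Type) [CommRing K]

/-- Right `H(C)`-modules valued in `K`-modules. -/
abbrev RightHModK := (HCat C)ᵒᵖ ⥤ ModuleCat K

/-- `G_*(C,N)([n]) = ⊕_{(a_1,...,a_n) ∈ C^n} N(a_1 ⋯ a_n)`. -/
abbrev GstObj (N : RightHModK C K) (n : ℕ) : Type :=
  ⨁ v : Fin n → C, N.obj (op (HCat.of (∏ i, v i)))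

/-- `b_j = ∏_{i : f(i) = j} a_i` for a pointed map `f : [n] → [m]` and a tuple `a`. -/
def bProd {n m : ℕ} (f : (n : GammaCat) ⟶ (m : GammaCat)) (v : Fin n → C)
    (j : Fin (m+1)) : C :=
  ∏ i ∈ Finset.univ.filter (fun i : Fin n => f.1 i.succ = j), v i

theorem bProd_mul {n m : ℕ} (f : (n : GammaCat) ⟶ (m : GammaCat)) (v : Fin n → C) :
    bProd C f v 0 * ∏ j : Fin m, bProd C f v j.succ = ∏ i, v i := by
  have h1 : ∏ j : Fin (m+1), bProd C f v j = ∏ i, v i := by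
    exact Finset.prod_fiberwise_of_maps_to (fun x _ => Finset.mem_univ (f.1 x.succ)) v
  rw [Fin.prod_univ_succ] at h1
  exact h1

/-- The covariant action of `G_*(C,N)` on a pointed map `f : [n] → [m]`:
`f_*(ι_{(a_1,...,a_n)}(x)) = ι_{(b_1,...,b_m)}((b_0)^*(x))`. -/
noncomputable def GstMap (N : RightHModK C K) {n m : ℕ}
    (f : (n : GammaCat) ⟶ (m : GammaCat)) :
    GstObj C K N n →ₗ[K] GstObj C K N m :=
  DirectSum.toModule K _ _ (fun v =>
    (DirectSum.lof K (Fin m → C)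
        (fun w : Fin m → C => N.obj (op (HCat.of (∏ j, w j))))
        (fun j : Fin m => bProd C f v j.succ)).comp
      (N.map (Quiver.Hom.op
        (⟨bProd C f v 0, bProd_mul C f v⟩ :
          HCat.of (∏ j : Fin m, bProd C f v j.succ) ⟶ HCat.of (∏ i, v i)))).hom)


section Aux
set_option linter.unusedSectionVars false
variable (C : Type) [CommMonoid C] [DecidableEq C] (K : Type) [CommRing K]

lemma bProd_comp {n m l : ℕ} (f : (n : GammaCat) ⟶ (m : GammaCat))
    (g : (m : GammaCat) ⟶ (l : GammaCat)) (v : Fin n → C) (k : Fin (l+1)) :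
    bProd C (f ≫ g) v k = ∏ j : Fin (m+1), if g.1 j = k then bProd C f v j else 1 := by
  unfold bProd
  rw [← Finset.prod_filter]
  rw [Finset.prod_fiberwise_eq_prod_filter Finset.univ
    (Finset.univ.filter (fun j => g.1 j = k)) (fun i : Fin n => f.1 i.succ) v]
  apply Finset.prod_congr _ (fun _ _ => rfl)
  apply Finset.filter_congr
  intro i _
  simp only [Finset.mem_filter, Finset.mem_univ, true_and]
  rfl

lemma bProd_comp_succ {n m l : ℕ} (f : (n : GammaCat) ⟶ (m : GammaCat))
    (g : (m : GammaCat) ⟶ (l : GammaCat)) (v : Fin n → C) (k : Fin l) :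
    bProd C (f ≫ g) v k.succ
      = bProd C g (fun j : Fin m => bProd C f v j.succ) k.succ := by
  rw [bProd_comp, Fin.prod_univ_succ, g.2, if_neg (Fin.succ_ne_zero k).symm, one_mul]
  unfold bProd
  rw [← Finset.prod_filter]

lemma bProd_comp_zero {n m l : ℕ} (f : (n : GammaCat) ⟶ (m : GammaCat))
    (g : (m : GammaCat) ⟶ (l : GammaCat)) (v : Fin n → C) :
    bProd C (f ≫ g) v 0
      = bProd C f v 0 * bProd C g (fun j : Fin m => bProd C f v j.succ) 0 := by
  rw [bProd_comp, Fin.prod_univ_succ, g.2, if_pos rfl]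
  congr 1
  unfold bProd
  rw [← Finset.prod_filter]

lemma bProd_id_succ {n : ℕ} (f : (n : GammaCat) ⟶ (n : GammaCat))
    (hf : ∀ i, f.1 i = i) (v : Fin n → C) (j : Fin n) :
    bProd C f v j.succ = v j := by
  unfold bProd
  rw [show Finset.univ.filter (fun i : Fin n => f.1 i.succ = j.succ)
      = {j} by ext i; simp [hf, Fin.succ_inj]]
  simp

lemma bProd_id_zero {n : ℕ} (f : (n : GammaCat) ⟶ (n : GammaCat))
    (hf : ∀ i, f.1 i = i) (v : Fin n → C) :
    bProd C f v 0 = 1 := by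
  unfold bProd
  rw [show Finset.univ.filter (fun i : Fin n => f.1 i.succ = 0)
      = ∅ by ext i; simp [hf, Fin.succ_ne_zero]]
  simp

lemma GstMap_lof (N : RightHModK C K) {n m : ℕ}
    (f : (n : GammaCat) ⟶ (m : GammaCat)) (v : Fin n → C)
    (x : N.obj (op (HCat.of (∏ i, v i)))) :
    GstMap C K N f
        (DirectSum.lof K (Fin n → C)
          (fun u => N.obj (op (HCat.of (∏ i, u i)))) v x)
      = DirectSum.lof K (Fin m → C)
          (fun u => N.obj (op (HCat.of (∏ j, u j))))
          (fun j : Fin m => bProd C f v j.succ)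
          (N.map (Quiver.Hom.op
            (⟨bProd C f v 0, bProd_mul C f v⟩ :
              HCat.of (∏ j : Fin m, bProd C f v j.succ) ⟶ HCat.of (∏ i, v i))) x) := by
  rw [GstMap, DirectSum.toModule_lof]
  rfl

lemma key (N : RightHModK C K) {m : ℕ} {a : C} (v w : Fin m → C) (h : v = w)
    (c c' : C) (hcc : c = c')
    (hc : c * ∏ j, v j = a) (hc' : c' * ∏ j, w j = a)
    (x : N.obj (op (HCat.of a))) :
    DirectSum.lof K (Fin m → C) (fun u => N.obj (op (HCat.of (∏ j, u j)))) v
        (N.map (Quiver.Hom.op (⟨c, hc⟩ : HCat.of (∏ j, v j) ⟶ HCat.of a)) x)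
      = DirectSum.lof K (Fin m → C) (fun u => N.obj (op (HCat.of (∏ j, u j)))) w
        (N.map (Quiver.Hom.op (⟨c', hc'⟩ : HCat.of (∏ j, w j) ⟶ HCat.of a)) x) := by
  subst h; subst hcc; rfl

lemma key_id (N : RightHModK C K) {n : ℕ} (w v : Fin n → C) (h : w = v)
    (c : C) (hcc : c = 1) (hc : c * ∏ j, w j = ∏ i, v i)
    (x : N.obj (op (HCat.of (∏ i, v i)))) :
    DirectSum.lof K (Fin n → C) (fun u => N.obj (op (HCat.of (∏ j, u j)))) w
        (N.map (Quiver.Hom.op (⟨c, hc⟩ : HCat.of (∏ j, w j) ⟶ HCat.of (∏ i, v i))) x)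
      = DirectSum.lof K (Fin n → C) (fun u => N.obj (op (HCat.of (∏ j, u j)))) v x := by
  subst h; subst hcc
  have hx : N.map (Quiver.Hom.op
      (⟨1, hc⟩ : HCat.of (∏ j, w j) ⟶ HCat.of (∏ i, w i))) x = x := by
    rw [show Quiver.Hom.op (⟨1, hc⟩ : HCat.of (∏ j, w j) ⟶ HCat.of (∏ i, w i))
        = 𝟙 (op (HCat.of (∏ i, w i))) from rfl, N.map_id]
    rfl
  rw [hx]

end Aux

/-- `G_*(C, N)` is a well-defined left `Γ`-module: the (`K`-linear) action on
morphisms preserves identities and compositions. -/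
theorem Gst_is_left_Gamma_module (N : RightHModK C K) :
    (∀ n : ℕ, GstMap C K N (𝟙 (n : GammaCat)) = LinearMap.id) ∧
    (∀ (n m l : ℕ) (f : (n : GammaCat) ⟶ (m : GammaCat))
      (g : (m : GammaCat) ⟶ (l : GammaCat)),
      GstMap C K N (f ≫ g) = (GstMap C K N g).comp (GstMap C K N f)) := by
  constructor
  · intro n
    apply DirectSum.linearMap_ext
    intro v
    apply LinearMap.ext
    intro x
    simp only [LinearMap.comp_apply, LinearMap.id_apply]
    rw [GstMap_lof]
    exact key_id C K N _ v (funext fun j => bProd_id_succ C _ (fun _ => rfl) v j)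
      _ (bProd_id_zero C _ (fun _ => rfl) v) _ x
  · intro n m l f g
    apply DirectSum.linearMap_ext
    intro v
    apply LinearMap.ext
    intro x
    simp only [LinearMap.comp_apply]
    rw [GstMap_lof, GstMap_lof, GstMap_lof]
    set w1 : Fin m → C := fun j => bProd C f v j.succ with hw1
    have hcomp : N.map (Quiver.Hom.op
          (⟨bProd C g w1 0, bProd_mul C g w1⟩ :
            HCat.of (∏ j : Fin l, bProd C g w1 j.succ) ⟶ HCat.of (∏ j, w1 j)))
          (N.map (Quiver.Hom.op
            (⟨bProd C f v 0, bProd_mul C f v⟩ :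
              HCat.of (∏ j : Fin m, bProd C f v j.succ) ⟶ HCat.of (∏ i, v i))) x)
        = N.map (Quiver.Hom.op
            ((⟨bProd C g w1 0, bProd_mul C g w1⟩ :
              HCat.of (∏ j : Fin l, bProd C g w1 j.succ) ⟶ HCat.of (∏ j, w1 j)) ≫
             (⟨bProd C f v 0, bProd_mul C f v⟩ :
              HCat.of (∏ j : Fin m, bProd C f v j.succ) ⟶ HCat.of (∏ i, v i)))) x := by
      rw [CategoryTheory.op_comp, N.map_comp]; rfl
    rw [hcomp]
    exact key C K N _ _
      (funext fun k => bProd_comp_succ C f g v k)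
      _ _ (bProd_comp_zero C f g v) _ _ x
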